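/- Let F : ℝ → ℝ be continuous, nonnegative, bounded, and assume F(m) = 0 for some m ∈ ℝ. Let v be a bounded function on ℝ^n × (0,1) with |∇v| ≤ M, and for R ≥ 2 define w_R(x,y) := m + min(1, max(0, |x| − (R−1))) · (v(x,y) − m) on C_R. Then w_R = v on ∂B_R × (0,1), w_R = m on C_{R−1}, |w_R| ≤ |m| + ‖v‖_∞, and the energy 𝓔_R(w_R) := (1/2)∫_{C_R} y^a|∇w_R|² + ∫_{B_R×{0}} F(w_R(·,0)) is bounded by C R^{n−1} for a constant C depending only on n, a, M, ‖v‖_∞, |m|, and ‖F‖_∞. -/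

import Mathlib

open MeasureTheory

lemma pow_sub_pow_le_aux (n : ℕ) {R : ℝ} (hR : 2 ≤ R) :
    R ^ n - (R - 1) ^ n ≤ n * R ^ (n - 1) := by
  have h1 : (0:ℝ) ≤ R - 1 := by linarith
  have h2 : R - 1 ≤ R := by linarith
  have hg := geom_sum₂_mul R (R - 1) n
  have hsum : (∑ i ∈ Finset.range n, R ^ i * (R - 1) ^ (n - 1 - i)) ≤ n * R ^ (n - 1) := by
    calc (∑ i ∈ Finset.range n, R ^ i * (R - 1) ^ (n - 1 - i))
        ≤ ∑ i ∈ Finset.range n, R ^ (n - 1) := by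
          refine Finset.sum_le_sum fun i hi => ?_
          calc R ^ i * (R - 1) ^ (n - 1 - i) ≤ R ^ i * R ^ (n - 1 - i) := by
                have h3 : (R-1)^(n-1-i) ≤ R^(n-1-i) := pow_le_pow_left₀ h1 h2 (n - 1 - i)
                nlinarith [pow_nonneg (by linarith : (0:ℝ) ≤ R) i]
            _ = R ^ (n - 1) := by
                rw [← pow_add]; congr 1
                have := Finset.mem_range.1 hi; omega
      _ = n * R ^ (n - 1) := by simp [Finset.sum_const, nsmul_eq_mul]
  calc R ^ n - (R - 1) ^ n
      = (∑ i ∈ Finset.range n, R ^ i * (R - 1) ^ (n - 1 - i)) * (R - (R-1)) := hg.symm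
    _ ≤ n * R ^ (n - 1) := by simpa using hsum

lemma cutoff_deriv_bound {n : ℕ} {v : EuclideanSpace ℝ (Fin n) × ℝ → ℝ} {K M m R : ℝ}
    (hvbd : ∀ p, |v p| ≤ K) (hvgrad : ∀ p, ‖fderiv ℝ v p‖ ≤ M) (hR : 2 ≤ R)
    {w : EuclideanSpace ℝ (Fin n) × ℝ → ℝ}
    (hw : ∀ p, w p = m + min 1 (max 0 (‖p.1‖ - (R - 1))) * (v p - m))
    (p : EuclideanSpace ℝ (Fin n) × ℝ) (hp : ‖p.1‖ < R) :
    ‖fderiv ℝ w p‖ ≤ if R - 1 ≤ ‖p.1‖ then M + K + |m| else 0 := by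
  have hM0 : 0 ≤ M := le_trans (norm_nonneg _) (hvgrad p)
  have hK0 : 0 ≤ K := le_trans (abs_nonneg _) (hvbd p)
  by_cases h1 : ‖p.1‖ < R - 1
  · rw [if_neg (not_le.2 h1)]
    have hopen : IsOpen {q : EuclideanSpace ℝ (Fin n) × ℝ | ‖q.1‖ < R - 1} :=
      isOpen_lt (continuous_norm.comp continuous_fst) continuous_const
    have hev : w =ᶠ[nhds p] fun _ => m := by
      filter_upwards [hopen.mem_nhds h1] with q hq
      rw [hw]
      have hq' : ‖q.1‖ < R - 1 := hq
      have : max 0 (‖q.1‖ - (R - 1)) = 0 := max_eq_left (by linarith)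
      simp [this]
    rw [hev.fderiv_eq]
    simp
  · rw [if_pos (not_lt.1 h1)]
    by_cases hdiff : DifferentiableAt ℝ w p
    swap
    · rw [fderiv_zero_of_not_differentiableAt hdiff]
      simp; positivity
    rcases eq_or_lt_of_le (not_lt.1 h1) with heq | hlt
    · -- ‖p.1‖ = R - 1
      have hb : ∀ᶠ q in nhds p, ‖w q - w p‖ ≤ (K + |m|) * ‖q - p‖ := by
        refine Filter.Eventually.of_forall fun q => ?_
        rw [hw q, hw p]
        have h0 : max 0 (‖p.1‖ - (R - 1)) = 0 := by rw [← heq]; simp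
        rw [h0]
        set t := min 1 (max 0 (‖q.1‖ - (R - 1))) with ht
        have ht0 : 0 ≤ t := le_min zero_le_one (le_max_left _ _)
        have htle : t ≤ ‖q - p‖ := by
          have h2 : ‖q.1‖ - (R - 1) ≤ ‖q.1 - p.1‖ := by
            rw [heq]; exact norm_sub_norm_le q.1 p.1
          have h3 : ‖q.1 - p.1‖ ≤ ‖q - p‖ := by
            have := norm_fst_le (q - p); simpa using this
          exact le_trans (min_le_right _ _) (max_le (norm_nonneg _) (by linarith))
        have hvq : |v q - m| ≤ K + |m| := by
          have h5 : |v q - m| ≤ |v q| + |m| := by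
            have := abs_add_le (v q) (-m); rw [abs_neg, ← sub_eq_add_neg] at this; exact this
          linarith [hvbd q]
        have hgoal : m + t * (v q - m) - (m + min 1 0 * (v p - m)) = t * (v q - m) := by
          rw [min_eq_right zero_le_one]; ring
        rw [hgoal, Real.norm_eq_abs, abs_mul, abs_of_nonneg ht0]
        calc t * |v q - m| ≤ ‖q - p‖ * (K + |m|) := by
              apply mul_le_mul htle hvq (abs_nonneg _) (norm_nonneg _)
          _ = (K + |m|) * ‖q - p‖ := mul_comm _ _
      have := hdiff.hasFDerivAt.le_of_lip' (by positivity) hb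
      linarith
    · -- R - 1 < ‖p.1‖ < R
      set ψ : EuclideanSpace ℝ (Fin n) × ℝ → ℝ := fun q => ‖q.1‖ - (R - 1) with hψdef
      have hU : IsOpen {q : EuclideanSpace ℝ (Fin n) × ℝ | R - 1 < ‖q.1‖ ∧ ‖q.1‖ < R} :=
        (isOpen_lt continuous_const (continuous_norm.comp continuous_fst)).inter
          (isOpen_lt (continuous_norm.comp continuous_fst) continuous_const)
      have hpU : p ∈ {q : EuclideanSpace ℝ (Fin n) × ℝ | R - 1 < ‖q.1‖ ∧ ‖q.1‖ < R} := ⟨hlt, hp⟩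
      have hev : w =ᶠ[nhds p] fun q => m + ψ q * (v q - m) := by
        filter_upwards [hU.mem_nhds hpU] with q hq
        obtain ⟨hq1, hq2⟩ := hq
        rw [hw]
        have h2 : max 0 (‖q.1‖ - (R - 1)) = ‖q.1‖ - (R - 1) := max_eq_right (by linarith)
        have h3 : min 1 (‖q.1‖ - (R - 1)) = ‖q.1‖ - (R - 1) := min_eq_right (by linarith)
        rw [h2, h3]
      have hne : p.1 ≠ 0 := by
        intro h; rw [h] at hlt; simp at hlt; linarith
      have hψdiff : DifferentiableAt ℝ ψ p := by
        have : DifferentiableAt ℝ (fun q : EuclideanSpace ℝ (Fin n) × ℝ => ‖q.1‖) p :=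
          (differentiableAt_fst (p := p)).norm ℝ hne
        exact this.sub_const _
      have hψnorm : ‖fderiv ℝ ψ p‖ ≤ 1 := by
        refine hψdiff.hasFDerivAt.le_of_lip' zero_le_one (Filter.Eventually.of_forall fun q => ?_)
        have h3 : ‖q.1 - p.1‖ ≤ ‖q - p‖ := by
          have := norm_fst_le (q - p); simpa using this
        have h4 : ψ q - ψ p = ‖q.1‖ - ‖p.1‖ := by simp [hψdef]
        rw [Real.norm_eq_abs, h4, one_mul]
        exact le_trans (abs_norm_sub_norm_le q.1 p.1) h3
      have hψpos : 0 < ψ p := by simp [hψdef]; linarith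
      have hψlt1 : ψ p < 1 := by simp [hψdef]; linarith
      have hg : DifferentiableAt ℝ (fun q => ψ q * (v q - m)) p := by
        have h2 : DifferentiableAt ℝ (fun q => m + ψ q * (v q - m)) p :=
          hdiff.congr_of_eventuallyEq hev.symm
        have h3 := h2.sub_const m
        simpa using h3
      have hv : DifferentiableAt ℝ v p := by
        have hev2 : v =ᶠ[nhds p] fun q => m + (ψ q * (v q - m)) * (ψ q)⁻¹ := by
          filter_upwards [hU.mem_nhds hpU] with q hq
          have hψq : ψ q ≠ 0 := by
            have := hq.1; show ‖q.1‖ - (R - 1) ≠ 0; intro hc; linarith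
          field_simp
          ring
        exact (((hg.mul (hψdiff.inv hψpos.ne')).const_add m).congr_of_eventuallyEq hev2)
      have hvm : DifferentiableAt ℝ (fun q => v q - m) p := hv.sub_const m
      rw [hev.fderiv_eq, fderiv_const_add, fderiv_fun_mul hψdiff hvm]
      have hfv : fderiv ℝ (fun q => v q - m) p = fderiv ℝ v p := fderiv_sub_const m
      rw [hfv]
      have hvpm : |v p - m| ≤ K + |m| := by
        have h5 : |v p - m| ≤ |v p| + |m| := by
          have := abs_add_le (v p) (-m); rw [abs_neg, ← sub_eq_add_neg] at this; exact this
        linarith [hvbd p]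
      calc ‖ψ p • fderiv ℝ v p + (v p - m) • fderiv ℝ ψ p‖
          ≤ ‖ψ p • fderiv ℝ v p‖ + ‖(v p - m) • fderiv ℝ ψ p‖ := norm_add_le _ _
        _ = |ψ p| * ‖fderiv ℝ v p‖ + |v p - m| * ‖fderiv ℝ ψ p‖ := by
            rw [norm_smul, norm_smul]; simp [Real.norm_eq_abs]
        _ ≤ 1 * M + (K + |m|) * 1 := by
            apply add_le_add
            · apply mul_le_mul (by rw [abs_of_pos hψpos]; linarith) (hvgrad p)
                (norm_nonneg _) zero_le_one
            · apply mul_le_mul hvpm hψnorm (norm_nonneg _) (by positivity)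
        _ = M + K + |m| := by ring

set_option maxHeartbeats 1000000 in

/-- The cutoff competitor w_R(x,y) = m + min(1, max(0, |x|−(R−1)))·(v(x,y)−m)
agrees with v on ∂B_R × (0,1), equals m on C_{R−1}, is bounded by |m| + ‖v‖_∞,
and has energy 𝓔_R(w_R) ≤ C R^{n−1} with C depending only on n, a, M, ‖v‖_∞,
|m| and ‖F‖_∞. -/
theorem competitor_energy_estimate
    (n : ℕ) (a : ℝ) (ha : a ∈ Set.Ioo (-1 : ℝ) 1)
    (F : ℝ → ℝ) (hFcont : Continuous F) (hFpos : ∀ t, 0 ≤ F t)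
    (KF : ℝ) (hFbd : ∀ t, F t ≤ KF)
    (m : ℝ) (hFm : F m = 0)
    (v : EuclideanSpace ℝ (Fin n) × ℝ → ℝ) (K M : ℝ)
    (hvbd : ∀ p, |v p| ≤ K)
    (hvgrad : ∀ p, ‖fderiv ℝ v p‖ ≤ M)
    (w : ℝ → EuclideanSpace ℝ (Fin n) × ℝ → ℝ)
    (hw : ∀ R p, w R p = m + min 1 (max 0 (‖p.1‖ - (R - 1))) * (v p - m)) :
    (∀ R : ℝ, 2 ≤ R →
      -- agrees with v on the lateral boundary ∂B_R × (0,1)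
      (∀ x : EuclideanSpace ℝ (Fin n), ∀ y ∈ Set.Ioo (0:ℝ) 1,
        ‖x‖ = R → w R (x, y) = v (x, y))
      -- equals m on the smaller cylinder C_{R-1}
      ∧ (∀ x : EuclideanSpace ℝ (Fin n), ∀ y ∈ Set.Ioo (0:ℝ) 1,
          ‖x‖ < R - 1 → w R (x, y) = m)
      -- uniform bound
      ∧ (∀ p, |w R p| ≤ |m| + K))
    -- energy estimate: 𝓔_R(w_R) ≤ C R^{n-1}
    ∧ (∃ C : ℝ, 0 < C ∧ ∀ R : ℝ, 2 ≤ R →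
        (1 / 2) * (∫ p in (Metric.ball (0 : EuclideanSpace ℝ (Fin n)) R) ×ˢ
              Set.Ioo (0:ℝ) 1, p.2 ^ a * ‖fderiv ℝ (w R) p‖ ^ 2)
          + (∫ x in Metric.ball (0 : EuclideanSpace ℝ (Fin n)) R, F (w R (x, 0)))
        ≤ C * R ^ (n - 1 : ℕ)) := by
  constructor
  · intro R hR
    refine ⟨fun x y hy hxR => ?_, fun x y hy hx => ?_, fun p => ?_⟩
    · rw [hw]
      have h1 : max 0 (‖(x, y).1‖ - (R - 1)) = 1 := by
        simp only [hxR]; rw [max_eq_right] <;> linarith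
      rw [h1, min_self]; ring
    · rw [hw]
      have h1 : max 0 (‖(x, y).1‖ - (R - 1)) = 0 := by
        rw [max_eq_left]; linarith [hx]
      rw [h1]
      rw [min_eq_right zero_le_one]; ring
    · rw [hw]
      set t := min 1 (max 0 (‖p.1‖ - (R - 1))) with htdef
      have ht0 : 0 ≤ t := le_min zero_le_one (le_max_left _ _)
      have ht1 : t ≤ 1 := min_le_left _ _
      have hK0 : 0 ≤ K := le_trans (abs_nonneg _) (hvbd p)
      have h1 : m + t * (v p - m) = (1 - t) * m + t * v p := by ring
      rw [h1]
      calc |(1 - t) * m + t * v p| ≤ |(1 - t) * m| + |t * v p| := abs_add_le _ _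
        _ = (1 - t) * |m| + t * |v p| := by
            rw [abs_mul, abs_mul, abs_of_nonneg (by linarith : (0:ℝ) ≤ 1 - t), abs_of_nonneg ht0]
        _ ≤ |m| + K := by nlinarith [abs_nonneg m, hvbd p, abs_nonneg (v p)]
  · by_cases hn : n = 0
    · subst hn
      refine ⟨1, one_pos, fun R hR => ?_⟩
      have hwc : w R = fun _ => m := by
        funext p
        rw [hw]
        have h0 : ‖p.1‖ = 0 := by
          have : p.1 = 0 := Subsingleton.elim _ _
          rw [this, norm_zero]
        rw [h0]
        have h1 : max 0 (0 - (R - 1)) = 0 := max_eq_left (by linarith)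
        rw [h1, min_eq_right zero_le_one]; ring
      rw [hwc]
      have h2 : ∀ p : EuclideanSpace ℝ (Fin 0) × ℝ,
          p.2 ^ a * ‖fderiv ℝ (fun _ : EuclideanSpace ℝ (Fin 0) × ℝ => m) p‖ ^ 2 = 0 := by
        intro p; simp
      simp only [h2, integral_zero, hFm, mul_zero, add_zero, Nat.zero_sub, pow_zero, mul_one]
      norm_num
    · have hn' : 0 < n := Nat.pos_of_ne_zero hn
      haveI : Nontrivial (EuclideanSpace ℝ (Fin n)) :=
        Module.nontrivial_of_finrank_pos (R := ℝ)
          (by rw [finrank_euclideanSpace_fin]; exact hn')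
      set c : ℝ := (volume (Metric.ball (0 : EuclideanSpace ℝ (Fin n)) 1)).toReal with hcdef
      have hc0 : 0 ≤ c := ENNReal.toReal_nonneg
      set Ia : ℝ := ∫ y in Set.Ioo (0:ℝ) 1, y ^ a with hIadef
      have hIa0 : 0 ≤ Ia :=
        setIntegral_nonneg measurableSet_Ioo fun y hy => Real.rpow_nonneg hy.1.le a
      have hIaint : IntegrableOn (fun y : ℝ => y ^ a) (Set.Ioo 0 1) volume :=
        (intervalIntegral.intervalIntegrable_rpow' ha.1).1.mono_set Set.Ioo_subset_Ioc_self
      have hK0 : 0 ≤ K := le_trans (abs_nonneg _) (hvbd (0, 0))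
      have hM0 : 0 ≤ M := le_trans (norm_nonneg _) (hvgrad (0, 0))
      have hKF0 : 0 ≤ KF := le_trans (le_of_eq hFm.symm) (hFbd m)
      set L : ℝ := M + K + |m| with hLdef
      have hL0 : 0 ≤ L := by positivity
      have hC0 : 0 < (1/2) * L^2 * Ia * (n * c) + KF * (n * c) + 1 := by
        have h1 : (0:ℝ) ≤ (1/2) * L^2 * Ia * (n * c) :=
          mul_nonneg (mul_nonneg (mul_nonneg (by norm_num) (sq_nonneg L)) hIa0)
            (mul_nonneg (Nat.cast_nonneg n) hc0)
        have h2 : (0:ℝ) ≤ KF * (n * c) :=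
          mul_nonneg hKF0 (mul_nonneg (Nat.cast_nonneg n) hc0)
        linarith
      refine ⟨(1/2) * L^2 * Ia * (n * c) + KF * (n * c) + 1, hC0, fun R hR => ?_⟩
      set A := Metric.ball (0 : EuclideanSpace ℝ (Fin n)) R with hAdef
      set Ann := A \ Metric.ball (0 : EuclideanSpace ℝ (Fin n)) (R - 1) with hAnndef
      have hAnnMeas : MeasurableSet Ann := measurableSet_ball.diff measurableSet_ball
      have hsub : Metric.ball (0 : EuclideanSpace ℝ (Fin n)) (R-1) ⊆ A :=
        Metric.ball_subset_ball (by linarith)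
      have hAnnFin : volume Ann < ⊤ :=
        lt_of_le_of_lt (measure_mono Set.diff_subset) measure_ball_lt_top
      have hballR : (volume A).toReal = R ^ n * c := by
        rw [hAdef, Measure.addHaar_ball _ _ (by linarith : (0:ℝ) ≤ R),
          finrank_euclideanSpace_fin, ENNReal.toReal_mul,
          ENNReal.toReal_ofReal (by positivity)]
      have hballR1 : (volume (Metric.ball (0 : EuclideanSpace ℝ (Fin n)) (R-1))).toReal
          = (R-1) ^ n * c := by
        rw [Measure.addHaar_ball _ _ (by linarith : (0:ℝ) ≤ R - 1),
          finrank_euclideanSpace_fin, ENNReal.toReal_mul,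
          ENNReal.toReal_ofReal (pow_nonneg (by linarith) n)]
      have hVol : (volume Ann).toReal ≤ (n : ℝ) * R ^ (n-1) * c := by
        rw [hAnndef, measure_diff hsub measurableSet_ball.nullMeasurableSet
          measure_ball_lt_top.ne,
          ENNReal.toReal_sub_of_le (measure_mono hsub) measure_ball_lt_top.ne,
          hballR, hballR1]
        have := pow_sub_pow_le_aux n hR
        nlinarith [hc0]
      have hVol0 : 0 ≤ (volume Ann).toReal := ENNReal.toReal_nonneg
      -- first integral
      have hI1 : (∫ p in A ×ˢ Set.Ioo (0:ℝ) 1, p.2 ^ a * ‖fderiv ℝ (w R) p‖ ^ 2)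
          ≤ (L^2 * (volume Ann).toReal) * Ia := by
        have hgint : IntegrableOn
            (fun p : EuclideanSpace ℝ (Fin n) × ℝ =>
              Set.indicator Ann (fun _ => L^2) p.1 * p.2 ^ a)
            (A ×ˢ Set.Ioo (0:ℝ) 1) := by
          rw [IntegrableOn, Measure.volume_eq_prod, ← Measure.prod_restrict]
          refine Integrable.mul_prod ?_ hIaint
          exact ((integrable_indicator_iff hAnnMeas).2
            (integrableOn_const hAnnFin.ne)).restrict
        have h0 : 0 ≤ᵐ[volume.restrict (A ×ˢ Set.Ioo (0:ℝ) 1)]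
            fun p : EuclideanSpace ℝ (Fin n) × ℝ => p.2 ^ a * ‖fderiv ℝ (w R) p‖ ^ 2 := by
          filter_upwards [ae_restrict_mem (measurableSet_ball.prod measurableSet_Ioo)] with p hp
          have hy : (0:ℝ) ≤ p.2 := hp.2.1.le
          positivity
        have hle : (fun p : EuclideanSpace ℝ (Fin n) × ℝ => p.2 ^ a * ‖fderiv ℝ (w R) p‖ ^ 2)
            ≤ᵐ[volume.restrict (A ×ˢ Set.Ioo (0:ℝ) 1)]
            fun p => Set.indicator Ann (fun _ => L^2) p.1 * p.2 ^ a := by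
          filter_upwards [ae_restrict_mem (measurableSet_ball.prod measurableSet_Ioo)] with p hp
          obtain ⟨hp1, hp2⟩ := hp
          have hpa : (0:ℝ) ≤ p.2 ^ a := Real.rpow_nonneg hp2.1.le a
          have hball : ‖p.1‖ < R := mem_ball_zero_iff.1 hp1
          have hb := cutoff_deriv_bound hvbd hvgrad hR (hw R) p hball
          by_cases hcase : R - 1 ≤ ‖p.1‖
          · rw [if_pos hcase] at hb
            have hmem : p.1 ∈ Ann :=
              ⟨hp1, fun h' => absurd (mem_ball_zero_iff.1 h') (not_lt.2 hcase)⟩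
            rw [Set.indicator_of_mem hmem]
            have hsq : ‖fderiv ℝ (w R) p‖ ^ 2 ≤ L ^ 2 := by
              rw [hLdef]; exact pow_le_pow_left₀ (norm_nonneg _) hb 2
            calc p.2 ^ a * ‖fderiv ℝ (w R) p‖ ^ 2 ≤ p.2 ^ a * L ^ 2 :=
                  mul_le_mul_of_nonneg_left hsq hpa
              _ = L ^ 2 * p.2 ^ a := mul_comm _ _
          · rw [if_neg hcase] at hb
            have h2 : fderiv ℝ (w R) p = 0 := norm_le_zero_iff.1 hb
            rw [h2]
            simp only [norm_zero]
            rw [zero_pow two_ne_zero, mul_zero]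
            exact mul_nonneg (Set.indicator_nonneg (fun _ _ => by positivity) _) hpa
        calc (∫ p in A ×ˢ Set.Ioo (0:ℝ) 1, p.2 ^ a * ‖fderiv ℝ (w R) p‖ ^ 2)
            ≤ ∫ p in A ×ˢ Set.Ioo (0:ℝ) 1,
                Set.indicator Ann (fun _ => L^2) p.1 * p.2 ^ a :=
              integral_mono_of_nonneg h0 hgint hle
          _ = (∫ x in A, Set.indicator Ann (fun _ => L^2) x) * Ia := by
              rw [Measure.volume_eq_prod]
              exact setIntegral_prod_mul (fun x => Set.indicator Ann (fun _ => L^2) x)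
                (fun y => y ^ a) A (Set.Ioo 0 1)
          _ = (L^2 * (volume Ann).toReal) * Ia := by
              rw [setIntegral_indicator hAnnMeas,
                Set.inter_eq_self_of_subset_right Set.diff_subset, setIntegral_const,
                smul_eq_mul, measureReal_def]
              ring
      -- second integral
      have hI2 : (∫ x in A, F (w R (x, 0))) ≤ KF * (volume Ann).toReal := by
        have hgint : IntegrableOn (Set.indicator Ann fun _ => KF) A :=
          ((integrable_indicator_iff hAnnMeas).2
            (integrableOn_const hAnnFin.ne)).restrict
        have h0 : 0 ≤ᵐ[volume.restrict A] fun x => F (w R (x, 0)) :=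
          Filter.Eventually.of_forall fun x => hFpos _
        have hle : (fun x => F (w R (x, 0)))
            ≤ᵐ[volume.restrict A] Set.indicator Ann fun _ => KF := by
          filter_upwards [ae_restrict_mem measurableSet_ball] with x hx
          by_cases hcase : R - 1 ≤ ‖x‖
          · have hmem : x ∈ Ann :=
              ⟨hx, fun h' => absurd (mem_ball_zero_iff.1 h') (not_lt.2 hcase)⟩
            rw [Set.indicator_of_mem hmem]
            exact hFbd _
          · have hwm : w R (x, 0) = m := by
              rw [hw]
              have h1 : max 0 (‖((x, (0:ℝ))).1‖ - (R-1)) = 0 := by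
                push_neg at hcase
                exact max_eq_left (by simp only []; linarith)
              rw [h1, min_eq_right zero_le_one]; ring
            rw [hwm, hFm]
            exact Set.indicator_nonneg (fun _ _ => hKF0) x
        calc (∫ x in A, F (w R (x, 0)))
            ≤ ∫ x in A, Set.indicator Ann (fun _ => KF) x :=
              integral_mono_of_nonneg h0 hgint hle
          _ = KF * (volume Ann).toReal := by
              rw [setIntegral_indicator hAnnMeas,
                Set.inter_eq_self_of_subset_right Set.diff_subset, setIntegral_const,
                smul_eq_mul, measureReal_def]
              ring
      -- combine
      have hR1 : (1:ℝ) ≤ R ^ (n-1) := one_le_pow₀ (by linarith)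
      clear_value A Ann c Ia L
      have key1 : L^2 * Ia * (volume Ann).toReal ≤ L^2 * Ia * ((n:ℝ) * R^(n-1) * c) :=
        mul_le_mul_of_nonneg_left hVol (by positivity)
      have key2 : KF * (volume Ann).toReal ≤ KF * ((n:ℝ) * R^(n-1) * c) :=
        mul_le_mul_of_nonneg_left hVol hKF0
      calc (1 / 2) * (∫ p in A ×ˢ Set.Ioo (0:ℝ) 1, p.2 ^ a * ‖fderiv ℝ (w R) p‖ ^ 2)
            + (∫ x in A, F (w R (x, 0)))
          ≤ (1/2) * ((L^2 * (volume Ann).toReal) * Ia) + KF * (volume Ann).toReal :=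
            add_le_add (mul_le_mul_of_nonneg_left hI1 (by norm_num : (0:ℝ) ≤ 1/2)) hI2
        _ ≤ ((1/2) * L^2 * Ia * (n * c) + KF * (n * c) + 1) * R ^ (n-1) := by
            nlinarith [key1, key2, hR1]
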